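/- Let ≻_HP be a hope-and-prepare preference with representation (u, C_HP, D_HP) and let ≻_T be a twofold preference with representation (u, C_T, D_T), with the same utility function u. Then ≻_T is more conservative than ≻_HP if and only if C_HP ⊆ C_T and D_HP ⊆ D_T. -/

import Mathlib

/-!
Framework: Anscombe–Aumann acts, finitely additive probability measures,
simple acts, hope-and-prepare preferences (Bastianello–Hill style setup).
-/

open Set

section Framework

variable (S : Type*) [MeasurableSpace S]

/-- The measurable sets (events) of `S`, as a subtype. -/
abbrev MSet := {A : Set S // MeasurableSet A}

/-- Finitely additive probability measures on `(S, Σ)`, viewed as real-valued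
set functions on events.  The weak* topology is the topology of pointwise
convergence on events, i.e. the product topology on `MSet S → ℝ`. -/
def ProbCharges : Set (MSet S → ℝ) :=
  {p | (∀ A, 0 ≤ p A) ∧ p ⟨Set.univ, MeasurableSet.univ⟩ = 1 ∧
    ∀ A B : MSet S, Disjoint A.1 B.1 → p ⟨A.1 ∪ B.1, A.2.union B.2⟩ = p A + p B}

end Framework

section Fns

variable {S : Type*} [MeasurableSpace S]

/-- `φ : S → ℝ` is a measurable simple function (an element of `B₀(Σ)`). -/
def IsSimpleFn (φ : S → ℝ) : Prop :=
  (Set.range φ).Finite ∧ ∀ y : ℝ, MeasurableSet (φ ⁻¹' {y})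

/-- The integral `∫ φ dp` of a simple function `φ` against a finitely additive
measure `p` (junk value `0` if `φ` is not simple). -/
noncomputable def fInt (p : MSet S → ℝ) (φ : S → ℝ) : ℝ :=
  @dite _ (IsSimpleFn φ) (Classical.dec _)
    (fun h => ∑ y ∈ h.1.toFinset, y * p ⟨φ ⁻¹' {y}, h.2 y⟩) (fun _ => 0)

/-- A functional `I : B₀(Σ) → ℝ` is monotonic. -/
def MonotonicFn (I : (S → ℝ) → ℝ) : Prop :=
  ∀ φ ψ, IsSimpleFn φ → IsSimpleFn ψ → (∀ s, φ s ≤ ψ s) → I φ ≤ I ψ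

/-- A functional `I : B₀(Σ) → ℝ` is constant-linear: `I(aφ + b) = a I(φ) + b`
for `a ≥ 0`, `b ∈ ℝ`. -/
def ConstLinearFn (I : (S → ℝ) → ℝ) : Prop :=
  ∀ φ, IsSimpleFn φ → ∀ a : ℝ, 0 ≤ a → ∀ b : ℝ,
    I (fun s => a * φ s + b) = a * I φ + b

end Fns

section Acts

variable {S : Type*} [MeasurableSpace S] {V : Type*} [AddCommGroup V] [Module ℝ V]

/-- `f : S → V` is a simple act with outcomes in `X`: it is `X`-valued,
takes finitely many values and is `Σ`-measurable. -/
def IsAct (X : Set V) (f : S → V) : Prop :=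
  (∀ s, f s ∈ X) ∧ (Set.range f).Finite ∧ ∀ v : V, MeasurableSet (f ⁻¹' {v})

/-- Pointwise mixture `αf + (1-α)g` of two acts. -/
def mixAct (α : ℝ) (f g : S → V) : S → V := fun s => α • f s + (1 - α) • g s

/-- The constant act with outcome `x`. -/
def constAct (S : Type*) {V : Type*} (x : V) : S → V := fun _ => x

/-- `u : V → ℝ` is affine on the convex set `X`. -/
def IsAffineOn (u : V → ℝ) (X : Set V) : Prop :=
  ∀ x ∈ X, ∀ y ∈ X, ∀ α : ℝ, 0 ≤ α → α ≤ 1 →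
    u (α • x + (1 - α) • y) = α * u x + (1 - α) * u y

/-- `u` is non-constant on `X`. -/
def NonConstOn (u : V → ℝ) (X : Set V) : Prop := ∃ x ∈ X, ∃ y ∈ X, u x ≠ u y

/-- Expected utility `∫ u(f) dp` of the act `f` under the measure `p`. -/
noncomputable def EU (u : V → ℝ) (f : S → V) (p : MSet S → ℝ) : ℝ :=
  fInt p (fun s => u (f s))

/-- Worst-case expected utility of `f` over the set of scenarios `C`. -/
noncomputable def minEU (u : V → ℝ) (C : Set (MSet S → ℝ)) (f : S → V) : ℝ :=
  sInf (EU u f '' C)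

/-- Best-case expected utility of `f` over the set of scenarios `D`. -/
noncomputable def maxEU (u : V → ℝ) (D : Set (MSet S → ℝ)) (f : S → V) : ℝ :=
  sSup (EU u f '' D)

/-- `f` and `g` are incomparable (`f ⋈ g`). -/
def Incomp (R : (S → V) → (S → V) → Prop) (f g : S → V) : Prop := ¬ R f g ∧ ¬ R g f

end Acts

section Axioms

variable {S : Type*} [MeasurableSpace S] {V : Type*} [AddCommGroup V] [Module ℝ V]
variable (X : Set V) (R : (S → V) → (S → V) → Prop)

/-- Axiom 1: `≻` is asymmetric and transitive on acts, and its restriction to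
constant acts is non-trivial and negatively transitive. -/
def PrefAx1 : Prop :=
  (∀ f g, IsAct X f → IsAct X g → R f g → ¬ R g f) ∧
  (∀ f g h, IsAct X f → IsAct X g → IsAct X h → R f g → R g h → R f h) ∧
  (∃ x ∈ X, ∃ y ∈ X, R (constAct S x) (constAct S y)) ∧
  (∀ x ∈ X, ∀ y ∈ X, ∀ z ∈ X, ¬ R (constAct S x) (constAct S y) →
    ¬ R (constAct S y) (constAct S z) → ¬ R (constAct S x) (constAct S z))

/-- Axiom 2 (continuity). -/
def PrefAx2 : Prop :=
  ∀ f g h, IsAct X f → IsAct X g → IsAct X h →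
    IsOpen {α : Set.Icc (0 : ℝ) 1 | R (mixAct (α : ℝ) f g) h} ∧
    IsOpen {α : Set.Icc (0 : ℝ) 1 | R h (mixAct (α : ℝ) f g)}

/-- Axiom 3 (certainty independence). -/
def PrefAx3 : Prop :=
  ∀ f g, IsAct X f → IsAct X g → ∀ x ∈ X, ∀ α : ℝ, 0 < α → α < 1 →
    (R f g ↔ R (mixAct α f (constAct S x)) (mixAct α g (constAct S x)))

/-- Axiom 4: for any outcome `x`, the upper and lower contour sets at the
constant act `x` are convex. -/
def PrefAx4 : Prop :=
  ∀ x ∈ X,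
    (∀ f g, IsAct X f → IsAct X g → R f (constAct S x) → R g (constAct S x) →
      ∀ α : ℝ, 0 ≤ α → α ≤ 1 → R (mixAct α f g) (constAct S x)) ∧
    (∀ f g, IsAct X f → IsAct X g → R (constAct S x) f → R (constAct S x) g →
      ∀ α : ℝ, 0 ≤ α → α ≤ 1 → R (constAct S x) (mixAct α f g))

/-- Axiom 5 (monotonicity). -/
def PrefAx5 : Prop :=
  ∀ f g, IsAct X f → IsAct X g →
    (∀ s : S, R (constAct S (f s)) (constAct S (g s))) → R f g

/-- Axiom 6: if every outcome incomparable to `f` is incomparable to `g`,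
then `f` and `g` are incomparable. -/
def PrefAx6 : Prop :=
  ∀ f g, IsAct X f → IsAct X g →
    (∀ x ∈ X, Incomp R f (constAct S x) → Incomp R g (constAct S x)) → Incomp R f g

/-- Axiom 7: if `f ⋈ x`, `x ≻ g`, `g ⋈ y` and `f ≻ y`, then `f ≻ g`. -/
def PrefAx7 : Prop :=
  ∀ f g, IsAct X f → IsAct X g → ∀ x ∈ X, ∀ y ∈ X,
    Incomp R f (constAct S x) → R (constAct S x) g →
    Incomp R g (constAct S y) → R f (constAct S y) → R f g

end Axioms

section Reps

variable {S : Type*} [MeasurableSpace S] {V : Type*} [AddCommGroup V] [Module ℝ V]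

/-- `(u, C, D)` is a hope-and-prepare representation of `R`. -/
def IsHPRep (X : Set V) (R : (S → V) → (S → V) → Prop) (u : V → ℝ)
    (C D : Set (MSet S → ℝ)) : Prop :=
  IsAffineOn u X ∧ NonConstOn u X ∧
  C.Nonempty ∧ D.Nonempty ∧ C ⊆ ProbCharges S ∧ D ⊆ ProbCharges S ∧
  IsCompact C ∧ IsCompact D ∧ Convex ℝ C ∧ Convex ℝ D ∧ (C ∩ D).Nonempty ∧
  ∀ f g, IsAct X f → IsAct X g →
    (R f g ↔ (minEU u C g < minEU u C f ∧ maxEU u D g < maxEU u D f))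

/-- `(u, C)` is a Bewley representation of `R`. -/
def IsBewleyRep (X : Set V) (R : (S → V) → (S → V) → Prop) (u : V → ℝ)
    (C : Set (MSet S → ℝ)) : Prop :=
  IsAffineOn u X ∧ NonConstOn u X ∧
  C.Nonempty ∧ C ⊆ ProbCharges S ∧ IsCompact C ∧ Convex ℝ C ∧
  ∀ f g, IsAct X f → IsAct X g → (R f g ↔ ∀ p ∈ C, EU u g p < EU u f p)

/-- `(u, C, D)` is a twofold multi-prior representation of `R`. -/
def IsTwofoldRep (X : Set V) (R : (S → V) → (S → V) → Prop) (u : V → ℝ)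
    (C D : Set (MSet S → ℝ)) : Prop :=
  IsAffineOn u X ∧ NonConstOn u X ∧
  C.Nonempty ∧ D.Nonempty ∧ C ⊆ ProbCharges S ∧ D ⊆ ProbCharges S ∧
  IsCompact C ∧ IsCompact D ∧ Convex ℝ C ∧ Convex ℝ D ∧ (C ∩ D).Nonempty ∧
  ∀ f g, IsAct X f → IsAct X g → (R f g ↔ maxEU u D g < minEU u C f)

end Reps


section ChargeLemmas

variable {S : Type*} [MeasurableSpace S]

lemma charge_congr {q : MSet S → ℝ} {A B : MSet S} (h : A.1 = B.1) : q A = q B := by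
  congr 1; exact Subtype.ext h

lemma charge_empty {q : MSet S → ℝ} (hq : q ∈ ProbCharges S) (A : MSet S) (hA : A.1 = ∅) :
    q A = 0 := by
  have hd : Disjoint A.1 A.1 := by rw [hA]; simp
  have h1 := hq.2.2 A A hd
  have h2 : q ⟨A.1 ∪ A.1, A.2.union A.2⟩ = q A := charge_congr (by simp)
  linarith

lemma charge_univ {q : MSet S → ℝ} (hq : q ∈ ProbCharges S) (A : MSet S)
    (hA : A.1 = Set.univ) : q A = 1 := by
  have h := charge_congr (q := q) (A := A) (B := ⟨Set.univ, MeasurableSet.univ⟩) hA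
  rw [h]; exact hq.2.1

lemma charge_sum {q : MSet S → ℝ} (hq : q ∈ ProbCharges S) {ι : Type*} (t : Finset ι)
    (P : ι → MSet S)
    (hdisj : ∀ i ∈ t, ∀ j ∈ t, i ≠ j → Disjoint (P i).1 (P j).1)
    (U : MSet S) (hU : U.1 = ⋃ i ∈ t, (P i).1) :
    q U = ∑ i ∈ t, q (P i) := by
  classical
  induction t using Finset.induction_on generalizing U with
  | empty =>
    simp only [Finset.sum_empty]
    exact charge_empty hq U (by simpa using hU)
  | @insert a t ha ih =>
    have hW : MeasurableSet (⋃ i ∈ t, (P i).1) :=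
      Finset.measurableSet_biUnion t (fun i _ => (P i).2)
    have hdisjW : Disjoint (P a).1 (⋃ i ∈ t, (P i).1) := by
      rw [Set.disjoint_iUnion₂_right]
      intro i hi
      exact hdisj a (Finset.mem_insert_self a t) i (Finset.mem_insert_of_mem hi)
        (fun h => ha (h ▸ hi))
    have hUeq : U = ⟨(P a).1 ∪ (⋃ i ∈ t, (P i).1), ((P a).2).union hW⟩ :=
      Subtype.ext (by rw [hU]; simp)
    rw [hUeq, hq.2.2 (P a) ⟨_, hW⟩ hdisjW, Finset.sum_insert ha,
      ih (fun i hi j hj hij => hdisj i (Finset.mem_insert_of_mem hi) j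
        (Finset.mem_insert_of_mem hj) hij) ⟨_, hW⟩ rfl]

lemma fInt_eq {q : MSet S → ℝ} {φ : S → ℝ} (h : IsSimpleFn φ) :
    fInt q φ = ∑ y ∈ h.1.toFinset, y * q ⟨φ ⁻¹' {y}, h.2 y⟩ := by
  unfold fInt
  rw [dif_pos h]

lemma fInt_eq_sum {q : MSet S → ℝ} (hq : q ∈ ProbCharges S) {φ : S → ℝ} (hφ : IsSimpleFn φ)
    {ι : Type*} (t : Finset ι) (P : ι → MSet S) (v : ι → ℝ)
    (hdisj : ∀ i ∈ t, ∀ j ∈ t, i ≠ j → Disjoint (P i).1 (P j).1)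
    (hcov : ∀ s : S, ∃ i ∈ t, s ∈ (P i).1)
    (hval : ∀ i ∈ t, ∀ s ∈ (P i).1, φ s = v i) :
    fInt q φ = ∑ i ∈ t, v i * q (P i) := by
  classical
  set t' := t.filter (fun i => ((P i).1).Nonempty) with ht'
  have hsub : t' ⊆ t := Finset.filter_subset _ _
  have hright : ∑ i ∈ t', v i * q (P i) = ∑ i ∈ t, v i * q (P i) := by
    apply Finset.sum_subset hsub
    intro i hi hni
    have hPe : (P i).1 = ∅ := by
      by_contra hne
      exact hni (Finset.mem_filter.mpr ⟨hi, Set.nonempty_iff_ne_empty.mpr hne⟩)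
    rw [charge_empty hq _ hPe, mul_zero]
  rw [← hright, fInt_eq hφ]
  have hfiber : ∀ y : ℝ, q ⟨φ ⁻¹' {y}, hφ.2 y⟩ =
      ∑ i ∈ t'.filter (fun i => v i = y), q (P i) := by
    intro y
    apply charge_sum hq _ P
    · intro i hi j hj hij
      exact hdisj i (hsub (Finset.mem_filter.mp hi).1) j (hsub (Finset.mem_filter.mp hj).1) hij
    · ext s
      simp only [Set.mem_preimage, Set.mem_singleton_iff, Set.mem_iUnion, exists_prop]
      constructor
      · intro hs
        obtain ⟨i, hi, hsi⟩ := hcov s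
        refine ⟨i, ?_, hsi⟩
        have hv : v i = y := by rw [← hval i hi s hsi]; exact hs
        exact Finset.mem_filter.mpr ⟨Finset.mem_filter.mpr ⟨hi, ⟨s, hsi⟩⟩, hv⟩
      · rintro ⟨i, hi, hsi⟩
        obtain ⟨hi', hvy⟩ := Finset.mem_filter.mp hi
        rw [hval i (hsub hi') s hsi, hvy]
  calc ∑ y ∈ hφ.1.toFinset, y * q ⟨φ ⁻¹' {y}, hφ.2 y⟩
      = ∑ y ∈ hφ.1.toFinset, ∑ i ∈ t'.filter (fun i => v i = y), v i * q (P i) := by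
        apply Finset.sum_congr rfl
        intro y _
        rw [hfiber y, Finset.mul_sum]
        apply Finset.sum_congr rfl
        intro i hi
        rw [(Finset.mem_filter.mp hi).2]
    _ = ∑ i ∈ t', v i * q (P i) := by
        apply Finset.sum_fiberwise_of_maps_to
        intro i hi
        obtain ⟨hit, s, hsi⟩ := Finset.mem_filter.mp hi
        rw [Set.Finite.mem_toFinset]
        exact ⟨s, hval i (hsub hi) s hsi⟩

lemma charge_fiber_sum {q : MSet S → ℝ} (hq : q ∈ ProbCharges S) {φ : S → ℝ}
    (hφ : IsSimpleFn φ) :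
    ∑ y ∈ hφ.1.toFinset, q ⟨φ ⁻¹' {y}, hφ.2 y⟩ = 1 := by
  classical
  rw [← charge_univ hq ⟨Set.univ, MeasurableSet.univ⟩ rfl]
  apply (charge_sum hq hφ.1.toFinset (fun y => ⟨φ ⁻¹' {y}, hφ.2 y⟩) ?_ _ ?_).symm
  · intro i _ j _ hij
    rw [Set.disjoint_left]
    rintro s hs1 hs2
    simp only [Set.mem_preimage, Set.mem_singleton_iff] at hs1 hs2
    exact hij (hs1 ▸ hs2 ▸ rfl)
  · ext s
    simp only [Set.mem_univ, true_iff, Set.mem_iUnion, Set.mem_preimage,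
      Set.mem_singleton_iff, exists_prop]
    exact ⟨φ s, Set.Finite.mem_toFinset _ |>.mpr ⟨s, rfl⟩, rfl⟩

end ChargeLemmas

section SimpleLemmas

variable {S : Type*} [MeasurableSpace S]

lemma IsSimpleFn.preimage {φ : S → ℝ} (h : IsSimpleFn φ) (T : Set ℝ) :
    MeasurableSet (φ ⁻¹' T) := by
  have heq : φ ⁻¹' T = ⋃ y ∈ (Set.range φ ∩ T), φ ⁻¹' {y} := by
    ext s
    simp only [Set.mem_preimage, Set.mem_iUnion, Set.mem_inter_iff, Set.mem_range,
      Set.mem_singleton_iff, exists_prop]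
    constructor
    · intro hs; exact ⟨φ s, ⟨⟨s, rfl⟩, hs⟩, rfl⟩
    · rintro ⟨y, ⟨_, hyT⟩, rfl⟩; exact hyT
  rw [heq]
  exact (h.1.inter_of_left T).measurableSet_biUnion (fun y _ => h.2 y)

lemma isSimpleFn_comp {φ : S → ℝ} (h : IsSimpleFn φ) (G : ℝ → ℝ) :
    IsSimpleFn (fun s => G (φ s)) := by
  constructor
  · apply (h.1.image G).subset
    rintro y ⟨s, rfl⟩
    exact ⟨φ s, ⟨s, rfl⟩, rfl⟩
  · intro y
    exact h.preimage (G ⁻¹' {y})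

lemma isSimpleFn_const (b : ℝ) : IsSimpleFn (fun _ : S => b) := by
  constructor
  · apply (Set.finite_singleton b).subset
    rintro y ⟨s, rfl⟩; rfl
  · intro y
    by_cases h : b = y
    · convert MeasurableSet.univ
      ext s; simp [h]
    · convert MeasurableSet.empty
      ext s; simp [h]

lemma isSimpleFn_add {φ ψ : S → ℝ} (hφ : IsSimpleFn φ) (hψ : IsSimpleFn ψ) :
    IsSimpleFn (fun s => φ s + ψ s) := by
  constructor
  · apply (Set.Finite.image2 (· + ·) hφ.1 hψ.1).subset
    rintro y ⟨s, rfl⟩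
    exact Set.mem_image2_of_mem ⟨s, rfl⟩ ⟨s, rfl⟩
  · intro y
    have heq : (fun s => φ s + ψ s) ⁻¹' {y} =
        ⋃ a ∈ Set.range φ, (φ ⁻¹' {a} ∩ ψ ⁻¹' {y - a}) := by
      ext s
      simp only [Set.mem_preimage, Set.mem_singleton_iff, Set.mem_iUnion, Set.mem_inter_iff,
        Set.mem_range, exists_prop, Set.mem_preimage, Set.mem_singleton_iff]
      constructor
      · intro hs
        exact ⟨φ s, ⟨s, rfl⟩, rfl, by linarith⟩
      · rintro ⟨a, _, ha, hb⟩
        rw [ha, hb]; ring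
    rw [heq]
    exact hφ.1.measurableSet_biUnion (fun a _ => (hφ.2 a).inter (hψ.2 (y - a)))

lemma isSimpleFn_ind (A : MSet S) (c : ℝ) :
    IsSimpleFn (A.1.indicator fun _ => c) := by
  classical
  constructor
  · apply ((Set.finite_singleton 0).insert c).subset
    rintro y ⟨s, rfl⟩
    by_cases h : s ∈ A.1 <;> simp [Set.indicator_apply, h]
  · intro y
    by_cases hc : c = y <;> by_cases h0 : (0 : ℝ) = y
    · convert MeasurableSet.univ
      ext s; by_cases h : s ∈ A.1 <;> simp [Set.indicator_apply, h, hc, h0]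
    · convert A.2
      ext s; by_cases h : s ∈ A.1 <;> simp [Set.indicator_apply, h, hc, h0]
    · convert A.2.compl
      ext s; by_cases h : s ∈ A.1 <;> simp [Set.indicator_apply, h, hc, h0]
    · convert MeasurableSet.empty
      ext s; by_cases h : s ∈ A.1 <;> simp [Set.indicator_apply, h, hc, h0]

lemma isSimpleFn_sum_ind (t : Finset (MSet S)) (c : MSet S → ℝ) :
    IsSimpleFn (fun s => ∑ A ∈ t, A.1.indicator (fun _ => c A) s) := by
  classical
  induction t using Finset.induction_on with
  | empty => simpa using isSimpleFn_const (S := S) 0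
  | @insert B t hB ih =>
    have := isSimpleFn_add (isSimpleFn_ind B (c B)) ih
    convert this using 1
    funext s
    rw [Finset.sum_insert hB]

lemma fInt_const {q : MSet S → ℝ} (hq : q ∈ ProbCharges S) (b : ℝ) :
    fInt q (fun _ : S => b) = b := by
  have h := fInt_eq_sum hq (isSimpleFn_const b) {Unit.unit}
    (fun _ => ⟨Set.univ, MeasurableSet.univ⟩) (fun _ => b)
    (by intro i _ j _ hij; exact absurd (Subsingleton.elim i j) hij)
    (fun s => ⟨Unit.unit, by simp, trivial⟩) (fun i _ s _ => rfl)
  rw [h, Finset.sum_singleton, hq.2.1, mul_one]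

lemma fInt_ind {q : MSet S → ℝ} (hq : q ∈ ProbCharges S) (A : MSet S) (c : ℝ) :
    fInt q (A.1.indicator fun _ => c) = c * q A := by
  classical
  have h := fInt_eq_sum hq (isSimpleFn_ind A c) ({true, false} : Finset Bool)
    (fun b => if b then A else ⟨A.1ᶜ, A.2.compl⟩) (fun b => if b then c else 0)
    ?_ ?_ ?_
  · rw [h]
    rw [Finset.sum_insert (by simp), Finset.sum_singleton]
    simp
  · intro i hi j hj hij
    match i, j with
    | true, true => exact absurd rfl hij
    | false, false => exact absurd rfl hij
    | true, false => simpa using disjoint_compl_right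
    | false, true => simpa using disjoint_compl_left
  · intro s
    by_cases h : s ∈ A.1
    · exact ⟨true, by simp, by simpa using h⟩
    · exact ⟨false, by simp, by simpa using h⟩
  · intro i hi s hs
    match i with
    | true =>
      simp only [if_true] at hs ⊢
      exact Set.indicator_of_mem hs _
    | false =>
      simp only [Bool.false_eq_true, if_false] at hs ⊢
      exact Set.indicator_of_notMem (by simpa using hs) _

lemma fInt_add {q : MSet S → ℝ} (hq : q ∈ ProbCharges S) {φ ψ : S → ℝ}
    (hφ : IsSimpleFn φ) (hψ : IsSimpleFn ψ) :
    fInt q (fun s => φ s + ψ s) = fInt q φ + fInt q ψ := by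
  classical
  set t := hφ.1.toFinset ×ˢ hψ.1.toFinset with ht
  set P : ℝ × ℝ → MSet S := fun ab => ⟨φ ⁻¹' {ab.1} ∩ ψ ⁻¹' {ab.2},
    (hφ.2 ab.1).inter (hψ.2 ab.2)⟩ with hP
  have hdisj : ∀ i ∈ t, ∀ j ∈ t, i ≠ j → Disjoint (P i).1 (P j).1 := by
    intro i _ j _ hij
    rw [Set.disjoint_left]
    rintro s ⟨h1, h2⟩ ⟨h3, h4⟩
    simp only [Set.mem_preimage, Set.mem_singleton_iff] at h1 h2 h3 h4
    exact hij (Prod.ext (h1 ▸ h3 ▸ rfl) (h2 ▸ h4 ▸ rfl))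
  have hcov : ∀ s : S, ∃ i ∈ t, s ∈ (P i).1 := by
    intro s
    refine ⟨(φ s, ψ s), ?_, by simp [hP]⟩
    rw [ht, Finset.mem_product]
    exact ⟨Set.Finite.mem_toFinset _ |>.mpr ⟨s, rfl⟩, Set.Finite.mem_toFinset _ |>.mpr ⟨s, rfl⟩⟩
  have h1 := fInt_eq_sum hq (isSimpleFn_add hφ hψ) t P (fun ab => ab.1 + ab.2) hdisj hcov
    (by rintro ⟨a, b⟩ _ s ⟨h1, h2⟩
        simp only [Set.mem_preimage, Set.mem_singleton_iff] at h1 h2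
        rw [h1, h2])
  have h2 := fInt_eq_sum hq hφ t P (fun ab => ab.1) hdisj hcov
    (by rintro ⟨a, b⟩ _ s ⟨h1, _⟩
        simpa using h1)
  have h3 := fInt_eq_sum hq hψ t P (fun ab => ab.2) hdisj hcov
    (by rintro ⟨a, b⟩ _ s ⟨_, h2⟩
        simpa using h2)
  rw [h1, h2, h3, ← Finset.sum_add_distrib]
  apply Finset.sum_congr rfl
  intro ab _
  ring

lemma fInt_sum_ind {q : MSet S → ℝ} (hq : q ∈ ProbCharges S) (t : Finset (MSet S))
    (c : MSet S → ℝ) :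
    fInt q (fun s => ∑ A ∈ t, A.1.indicator (fun _ => c A) s) = ∑ A ∈ t, c A * q A := by
  classical
  induction t using Finset.induction_on with
  | empty => simpa using fInt_const hq 0
  | @insert B t hB ih =>
    have hfun : (fun s => ∑ A ∈ insert B t, A.1.indicator (fun _ => c A) s) =
        (fun s => B.1.indicator (fun _ => c B) s + ∑ A ∈ t, A.1.indicator (fun _ => c A) s) := by
      funext s; rw [Finset.sum_insert hB]
    rw [hfun, fInt_add hq (isSimpleFn_ind B (c B)) (isSimpleFn_sum_ind t c), fInt_ind hq,
      ih, Finset.sum_insert hB]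

lemma fInt_affine {q : MSet S → ℝ} (hq : q ∈ ProbCharges S) {φ : S → ℝ}
    (hφ : IsSimpleFn φ) (a b : ℝ) :
    fInt q (fun s => a * φ s + b) = a * fInt q φ + b := by
  classical
  set P : ℝ → MSet S := fun y => ⟨φ ⁻¹' {y}, hφ.2 y⟩ with hP
  have hdisj : ∀ i ∈ hφ.1.toFinset, ∀ j ∈ hφ.1.toFinset, i ≠ j → Disjoint (P i).1 (P j).1 := by
    intro i _ j _ hij
    rw [Set.disjoint_left]
    rintro s h1 h2
    simp only [hP, Set.mem_preimage, Set.mem_singleton_iff] at h1 h2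
    exact hij (h1 ▸ h2 ▸ rfl)
  have hcov : ∀ s : S, ∃ y ∈ hφ.1.toFinset, s ∈ (P y).1 := by
    intro s
    exact ⟨φ s, Set.Finite.mem_toFinset _ |>.mpr ⟨s, rfl⟩, by simp [hP]⟩
  have h1 := fInt_eq_sum hq (isSimpleFn_comp hφ (fun r => a * r + b)) hφ.1.toFinset P
    (fun y => a * y + b) hdisj hcov
    (by intro y _ s hs
        simp only [hP, Set.mem_preimage, Set.mem_singleton_iff] at hs
        rw [hs])
  have h2 := fInt_eq_sum hq hφ hφ.1.toFinset P (fun y => y) hdisj hcov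
    (by intro y _ s hs
        simpa [hP] using hs)
  have h3 := charge_fiber_sum hq hφ
  rw [h1, h2]
  have h3' : ∑ y ∈ hφ.1.toFinset, q (P y) = 1 := h3
  calc ∑ y ∈ hφ.1.toFinset, (a * y + b) * q (P y)
      = a * ∑ y ∈ hφ.1.toFinset, y * q (P y) + b * ∑ y ∈ hφ.1.toFinset, q (P y) := by
        rw [Finset.mul_sum, Finset.mul_sum, ← Finset.sum_add_distrib]
        apply Finset.sum_congr rfl; intro y _; ring
    _ = a * ∑ y ∈ hφ.1.toFinset, y * q (P y) + b := by rw [h3', mul_one]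

lemma fInt_bounds {q : MSet S → ℝ} (hq : q ∈ ProbCharges S) {φ : S → ℝ}
    (hφ : IsSimpleFn φ) {lo hi : ℝ} (hlo : ∀ s, lo ≤ φ s) (hhi : ∀ s, φ s ≤ hi)
    [Nonempty S] :
    lo ≤ fInt q φ ∧ fInt q φ ≤ hi := by
  classical
  set P : ℝ → MSet S := fun y => ⟨φ ⁻¹' {y}, hφ.2 y⟩ with hP
  have hdisj : ∀ i ∈ hφ.1.toFinset, ∀ j ∈ hφ.1.toFinset, i ≠ j → Disjoint (P i).1 (P j).1 := by
    intro i _ j _ hij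
    rw [Set.disjoint_left]
    rintro s h1 h2
    simp only [hP, Set.mem_preimage, Set.mem_singleton_iff] at h1 h2
    exact hij (h1 ▸ h2 ▸ rfl)
  have hcov : ∀ s : S, ∃ y ∈ hφ.1.toFinset, s ∈ (P y).1 := by
    intro s
    exact ⟨φ s, Set.Finite.mem_toFinset _ |>.mpr ⟨s, rfl⟩, by simp [hP]⟩
  have h2 := fInt_eq_sum hq hφ hφ.1.toFinset P (fun y => y) hdisj hcov
    (by intro y _ s hs
        simpa [hP] using hs)
  have h3 : ∑ y ∈ hφ.1.toFinset, q (P y) = 1 := charge_fiber_sum hq hφ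
  have hrange : ∀ y ∈ hφ.1.toFinset, lo ≤ y ∧ y ≤ hi := by
    intro y hy
    obtain ⟨s, rfl⟩ := Set.Finite.mem_toFinset _ |>.mp hy
    exact ⟨hlo s, hhi s⟩
  constructor
  · rw [h2]
    calc lo = ∑ y ∈ hφ.1.toFinset, lo * q (P y) := by rw [← Finset.mul_sum, h3, mul_one]
      _ ≤ ∑ y ∈ hφ.1.toFinset, y * q (P y) :=
        Finset.sum_le_sum (fun y hy => mul_le_mul_of_nonneg_right (hrange y hy).1 (hq.1 _))
  · rw [h2]
    calc ∑ y ∈ hφ.1.toFinset, y * q (P y) ≤ ∑ y ∈ hφ.1.toFinset, hi * q (P y) :=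
        Finset.sum_le_sum (fun y hy => mul_le_mul_of_nonneg_right (hrange y hy).2 (hq.1 _))
      _ = hi := by rw [← Finset.mul_sum, h3, mul_one]

end SimpleLemmas

section ActLemmas

variable {S : Type*} [MeasurableSpace S] {V : Type*} [AddCommGroup V] [Module ℝ V]

lemma IsAct.preimage {X : Set V} {f : S → V} (hf : IsAct X f) (T : Set V) :
    MeasurableSet (f ⁻¹' T) := by
  have heq : f ⁻¹' T = ⋃ v ∈ (Set.range f ∩ T), f ⁻¹' {v} := by
    ext s
    simp only [Set.mem_preimage, Set.mem_iUnion, Set.mem_inter_iff, Set.mem_range,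
      Set.mem_singleton_iff, exists_prop]
    constructor
    · intro hs; exact ⟨f s, ⟨⟨s, rfl⟩, hs⟩, rfl⟩
    · rintro ⟨v, ⟨_, hvT⟩, rfl⟩; exact hvT
  rw [heq]
  exact (hf.2.1.inter_of_left T).measurableSet_biUnion (fun v _ => hf.2.2 v)

lemma isSimpleFn_comp_act {X : Set V} {f : S → V} (hf : IsAct X f) (w : V → ℝ) :
    IsSimpleFn (fun s => w (f s)) := by
  constructor
  · apply (hf.2.1.image w).subset
    rintro y ⟨s, rfl⟩
    exact ⟨f s, ⟨s, rfl⟩, rfl⟩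
  · intro y
    exact hf.preimage (w ⁻¹' {y})

lemma isAct_comp {X : Set V} {φ : S → ℝ} (hφ : IsSimpleFn φ) (G : ℝ → V)
    (hG : ∀ r, G r ∈ X) : IsAct X (fun s => G (φ s)) := by
  refine ⟨fun s => hG (φ s), ?_, ?_⟩
  · apply (hφ.1.image G).subset
    rintro v ⟨s, rfl⟩
    exact ⟨φ s, ⟨s, rfl⟩, rfl⟩
  · intro v
    exact hφ.preimage (G ⁻¹' {v})

lemma isAct_const {X : Set V} {z : V} (hz : z ∈ X) : IsAct X (constAct S z) := by
  refine ⟨fun _ => hz, ?_, ?_⟩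
  · apply (Set.finite_singleton z).subset
    rintro v ⟨s, rfl⟩; rfl
  · intro v
    by_cases h : z = v
    · convert MeasurableSet.univ
      ext s; simp [constAct, h]
    · convert MeasurableSet.empty
      ext s; simp [constAct, h]

lemma EU_const {q : MSet S → ℝ} (hq : q ∈ ProbCharges S) (u : V → ℝ) (z : V) :
    EU u (constAct S z) q = u z := by
  unfold EU constAct
  exact fInt_const hq (u z)

lemma minEU_const {u : V → ℝ} {C : Set (MSet S → ℝ)} (hC : C ⊆ ProbCharges S)
    (hne : C.Nonempty) (z : V) : minEU u C (constAct S z) = u z := by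
  have himg : EU u (constAct S z) '' C = {u z} := by
    apply Set.eq_singleton_iff_nonempty_unique_mem.mpr
    refine ⟨hne.image _, ?_⟩
    rintro r ⟨q, hq, rfl⟩
    exact EU_const (hC hq) u z
  unfold minEU
  rw [himg, csInf_singleton]

lemma maxEU_const {u : V → ℝ} {D : Set (MSet S → ℝ)} (hD : D ⊆ ProbCharges S)
    (hne : D.Nonempty) (z : V) : maxEU u D (constAct S z) = u z := by
  have himg : EU u (constAct S z) '' D = {u z} := by
    apply Set.eq_singleton_iff_nonempty_unique_mem.mpr
    refine ⟨hne.image _, ?_⟩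
    rintro r ⟨q, hq, rfl⟩
    exact EU_const (hD hq) u z
  unfold maxEU
  rw [himg, csSup_singleton]

/-- Bounds on expected utility of an act over all probability charges. -/
lemma EU_act_bounds [Nonempty S] {X : Set V} {f : S → V} (hf : IsAct X f) (u : V → ℝ) :
    ∃ lo hi : ℝ, ∀ q ∈ ProbCharges S, lo ≤ EU u f q ∧ EU u f q ≤ hi := by
  classical
  have hs := isSimpleFn_comp_act hf u
  have hne : hs.1.toFinset.Nonempty := by
    obtain ⟨s⟩ := ‹Nonempty S›
    exact ⟨u (f s), (Set.Finite.mem_toFinset hs.1).mpr ⟨s, rfl⟩⟩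
  refine ⟨hs.1.toFinset.min' hne, hs.1.toFinset.max' hne, fun q hq => ?_⟩
  exact fInt_bounds hq hs
    (fun s => Finset.min'_le _ _ ((Set.Finite.mem_toFinset hs.1).mpr ⟨s, rfl⟩))
    (fun s => Finset.le_max' _ _ ((Set.Finite.mem_toFinset hs.1).mpr ⟨s, rfl⟩))

end ActLemmas

section Functional

/-- A continuous linear functional on a product `ι → ℝ` is a finite linear
combination of coordinate evaluations. -/
lemma clm_pi_repr {ι : Type*} [DecidableEq ι] (L : ((ι → ℝ) →L[ℝ] ℝ)) :
    ∃ t : Finset ι, ∀ x : ι → ℝ, L x = ∑ i ∈ t, x i * L (Pi.single i 1) := by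
  classical
  have hball : L ⁻¹' (Set.Ioo (-1 : ℝ) 1) ∈ nhds (0 : ι → ℝ) := by
    apply L.continuous.continuousAt.preimage_mem_nhds
    rw [map_zero]
    exact Ioo_mem_nhds (by norm_num) (by norm_num)
  rw [nhds_pi, Filter.mem_pi] at hball
  obtain ⟨I, hIfin, T, hT, hsub⟩ := hball
  refine ⟨hIfin.toFinset, fun x => ?_⟩
  have hker : ∀ z : ι → ℝ, (∀ i ∈ I, z i = 0) → L z = 0 := by
    intro z hz
    by_contra hnz
    have h2 : ((2 / L z) • z) ∈ I.pi T := by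
      intro i hi
      simp only [Pi.smul_apply, hz i hi, smul_zero]
      exact mem_of_mem_nhds (hT i)
    have h3 := hsub h2
    simp only [Set.mem_preimage, map_smul, smul_eq_mul, Set.mem_Ioo] at h3
    rw [div_mul_cancel₀ _ hnz] at h3
    linarith [h3.2]
  have hzero : L (x - ∑ i ∈ hIfin.toFinset, x i • (Pi.single i 1 : ι → ℝ)) = 0 := by
    apply hker
    intro i hi
    have hit : i ∈ hIfin.toFinset := hIfin.mem_toFinset.mpr hi
    simp only [Pi.sub_apply, Finset.sum_apply, Pi.smul_apply, smul_eq_mul]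
    rw [Finset.sum_eq_single i]
    · simp [Pi.single_apply]
    · intro j _ hj
      simp [Pi.single_apply, Ne.symm hj]
    · intro h
      exact absurd hit h
  have hdec : L x = L (x - ∑ i ∈ hIfin.toFinset, x i • (Pi.single i 1 : ι → ℝ))
      + L (∑ i ∈ hIfin.toFinset, x i • (Pi.single i 1 : ι → ℝ)) := by
    rw [← map_add]
    congr 1
    abel
  rw [hdec, hzero, zero_add, map_sum]
  apply Finset.sum_congr rfl
  intro i _
  rw [map_smul, smul_eq_mul]

variable {S : Type*} [MeasurableSpace S]

/-- Separation of a point from a compact convex set of charges by a finite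
linear combination of evaluations at events. -/
lemma separate_point {C : Set (MSet S → ℝ)} (hconv : Convex ℝ C) (hcomp : IsCompact C)
    {p : MSet S → ℝ} (hp : p ∉ C) :
    ∃ (t : Finset (MSet S)) (c : MSet S → ℝ) (r : ℝ),
      (∀ q ∈ C, ∑ A ∈ t, c A * q A < r) ∧ r < ∑ A ∈ t, c A * p A := by
  classical
  obtain ⟨L, r, h1, h2⟩ := geometric_hahn_banach_closed_point hconv hcomp.isClosed hp
  obtain ⟨t, ht⟩ := clm_pi_repr L
  refine ⟨t, fun A => L (Pi.single A 1), r, fun q hq => ?_, ?_⟩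
  · have := h1 q hq
    rw [ht q] at this
    calc ∑ A ∈ t, L (Pi.single A 1) * q A = ∑ A ∈ t, q A * L (Pi.single A 1) := by
          apply Finset.sum_congr rfl; intro A _; ring
      _ < r := this
  · have : r < ∑ A ∈ t, p A * L (Pi.single A 1) := ht p ▸ h2
    calc r < ∑ A ∈ t, p A * L (Pi.single A 1) := this
      _ = ∑ A ∈ t, L (Pi.single A 1) * p A := by
          apply Finset.sum_congr rfl; intro A _; ring

end Functional

section Construct

variable {S : Type*} [MeasurableSpace S] [Nonempty S]
variable {V : Type*} [AddCommGroup V] [Module ℝ V]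

lemma exists_const_outcome {X : Set V} (hX : Convex ℝ X) {u : V → ℝ} (hu : IsAffineOn u X)
    {x y : V} (hx : x ∈ X) (hy : y ∈ X) (hxy : u x < u y) {c : ℝ}
    (h1 : u x ≤ c) (h2 : c ≤ u y) : ∃ z ∈ X, u z = c := by
  set θ := (c - u x) / (u y - u x) with hθ
  have hθ0 : 0 ≤ θ := div_nonneg (by linarith) (by linarith)
  have hθ1 : θ ≤ 1 := by rw [hθ, div_le_one (by linarith)]; linarith
  refine ⟨θ • y + (1 - θ) • x, hX hy hx hθ0 (by linarith) (by ring), ?_⟩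
  rw [hu y hy x hx θ hθ0 hθ1, hθ]
  have hne : u y - u x ≠ 0 := sub_ne_zero_of_ne (ne_of_gt hxy)
  field_simp
  ring

lemma construct_act {X : Set V} (hX : Convex ℝ X) {u : V → ℝ} (hu : IsAffineOn u X)
    {x y : V} (hx : x ∈ X) (hy : y ∈ X) (hxy : u x < u y)
    {ψ : S → ℝ} (hψ : IsSimpleFn ψ) :
    ∃ (f : S → V) (a b : ℝ), IsAct X f ∧ 0 < a ∧
      (∀ q ∈ ProbCharges S, EU u f q = a * fInt q ψ + b) ∧
      (∀ q ∈ ProbCharges S, u x ≤ EU u f q ∧ EU u f q ≤ u y) := by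
  classical
  have hne : hψ.1.toFinset.Nonempty := by
    obtain ⟨s⟩ := ‹Nonempty S›
    exact ⟨ψ s, (Set.Finite.mem_toFinset hψ.1).mpr ⟨s, rfl⟩⟩
  set m := hψ.1.toFinset.min' hne with hm
  set M := hψ.1.toFinset.max' hne with hM
  set d := max (M - m) 1 with hd
  have hd0 : 0 < d := lt_of_lt_of_le one_pos (le_max_right _ _)
  set cl : ℝ → ℝ := fun r => max 0 (min 1 ((r - m) / d)) with hcl
  have hcl0 : ∀ r, 0 ≤ cl r := fun r => le_max_left _ _
  have hcl1 : ∀ r, cl r ≤ 1 := fun r => max_le (by norm_num) (min_le_left _ _)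
  have hclψ : ∀ s : S, cl (ψ s) = (ψ s - m) / d := by
    intro s
    have hmem : ψ s ∈ hψ.1.toFinset := (Set.Finite.mem_toFinset hψ.1).mpr ⟨s, rfl⟩
    have h1 : m ≤ ψ s := Finset.min'_le _ _ hmem
    have h2 : ψ s ≤ M := Finset.le_max' _ _ hmem
    have hgen : 0 ≤ (ψ s - m) / d := div_nonneg (by linarith) hd0.le
    have hle1 : (ψ s - m) / d ≤ 1 := by
      rw [div_le_one hd0]
      calc ψ s - m ≤ M - m := by linarith
        _ ≤ d := le_max_left _ _
    rw [hcl]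
    simp only
    rw [min_eq_right hle1, max_eq_right hgen]
  set G : ℝ → V := fun r => cl r • y + (1 - cl r) • x with hG
  have hGX : ∀ r, G r ∈ X := fun r =>
    hX hy hx (hcl0 r) (by linarith [hcl1 r]) (by ring)
  set f : S → V := fun s => G (ψ s) with hf
  have hact : IsAct X f := isAct_comp hψ G hGX
  set a := (u y - u x) / d with ha
  have ha0 : 0 < a := div_pos (by linarith) hd0
  set b := u x - a * m with hb
  have hufkey : ∀ s : S, u (f s) = cl (ψ s) * u y + (1 - cl (ψ s)) * u x :=
    fun s => hu y hy x hx (cl (ψ s)) (hcl0 _) (hcl1 _)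
  have huf : ∀ s : S, u (f s) = a * ψ s + b := by
    intro s
    rw [hufkey s, hclψ s, hb, ha]
    field_simp
    ring
  have hufb : ∀ s : S, u x ≤ u (f s) ∧ u (f s) ≤ u y := by
    intro s
    rw [hufkey s]
    constructor <;> nlinarith [hcl0 (ψ s), hcl1 (ψ s)]
  refine ⟨f, a, b, hact, ha0, ?_, ?_⟩
  · intro q hq
    have hfe : (fun s => u (f s)) = (fun s => a * ψ s + b) := funext huf
    unfold EU
    rw [hfe, fInt_affine hq hψ]
  · intro q hq
    exact fInt_bounds hq (isSimpleFn_comp_act hact u) (fun s => (hufb s).1)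
      (fun s => (hufb s).2)

end Construct

section Statement

variable {S : Type*} [MeasurableSpace S] [Nonempty S]
variable {V : Type*} [AddCommGroup V] [Module ℝ V]

/-- Proposition 1(ii): a twofold preference `≻_T` with
representation `(u, C_T, D_T)` is more conservative than the hope-and-prepare
preference `≻_HP` with representation `(u, C_HP, D_HP)` iff `C_HP ⊆ C_T` and
`D_HP ⊆ D_T`. -/
theorem statement5 (X : Set V) (hX : Convex ℝ X) (hX2 : ∃ x ∈ X, ∃ y ∈ X, x ≠ y)
    (Rhp Rt : (S → V) → (S → V) → Prop) (u : V → ℝ)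
    (CHP DHP CT DT : Set (MSet S → ℝ))
    (hhp : IsHPRep X Rhp u CHP DHP) (ht : IsTwofoldRep X Rt u CT DT) :
    (∀ f g, IsAct X f → IsAct X g → Rt f g → Rhp f g) ↔ (CHP ⊆ CT ∧ DHP ⊆ DT) := by
  classical
  obtain ⟨huaff, hunc, hCne, hDne, hCsub, hDsub, hCcomp, hDcomp, hCconv, hDconv, hCD, hhpiff⟩ := hhp
  obtain ⟨-, -, hTCne, hTDne, hTCsub, hTDsub, hTCcomp, hTDcomp, hTCconv, hTDconv, hTCD, htiff⟩ := ht
  obtain ⟨x0, hx0, y0, hy0, hxy0⟩ := hunc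
  obtain ⟨x, hx, y, hy, hxy⟩ : ∃ x ∈ X, ∃ y ∈ X, u x < u y := by
    rcases lt_or_gt_of_ne hxy0 with h | h
    · exact ⟨x0, hx0, y0, hy0, h⟩
    · exact ⟨y0, hy0, x0, hx0, h⟩
  constructor
  · intro hcons
    constructor
    · -- CHP ⊆ CT
      intro p hp
      by_contra hpT
      obtain ⟨t, c, r, hsep1, hsep2⟩ := separate_point hTCconv hTCcomp hpT
      set ψ : S → ℝ := fun s => ∑ A ∈ t, A.1.indicator (fun _ => -(c A)) s with hψdef
      have hψ : IsSimpleFn ψ := isSimpleFn_sum_ind t (fun A => -(c A))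
      have hψint : ∀ q ∈ ProbCharges S, fInt q ψ = -(∑ A ∈ t, c A * q A) := by
        intro q hq
        rw [hψdef, fInt_sum_ind hq, ← Finset.sum_neg_distrib]
        exact Finset.sum_congr rfl (fun A _ => by ring)
      obtain ⟨f, a, b, hact, ha0, hEU, hbnd⟩ := construct_act hX huaff hx hy hxy hψ
      have hp' : p ∈ ProbCharges S := hCsub hp
      set cmid := a * (-r) + b with hcmid
      have hfCT : ∀ q ∈ CT, cmid < EU u f q := by
        intro q hq
        rw [hEU q (hTCsub hq), hψint q (hTCsub hq), hcmid]
        have h1 := hsep1 q hq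
        nlinarith
      have hfp : EU u f p < cmid := by
        rw [hEU p hp', hψint p hp', hcmid]
        nlinarith [hsep2]
      set c' := (EU u f p + cmid) / 2 with hc'
      have hc'1 : EU u f p < c' := by rw [hc']; linarith
      have hc'2 : c' < cmid := by rw [hc']; linarith
      obtain ⟨q0, hq0⟩ := hTCne
      have hxc' : u x ≤ c' := le_trans (hbnd p hp').1 hc'1.le
      have hyc' : c' ≤ u y := by
        have h1 := hfCT q0 hq0
        have h2 := (hbnd q0 (hTCsub hq0)).2
        linarith
      obtain ⟨z, hz, huz⟩ := exists_const_outcome hX huaff hx hy hxy hxc' hyc'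
      have hgact : IsAct X (constAct S z) := isAct_const hz
      have hRt : Rt f (constAct S z) := by
        rw [htiff f (constAct S z) hact hgact, maxEU_const hTDsub hTDne z, huz]
        have hmin : cmid ≤ minEU u CT f := by
          apply le_csInf ((Set.Nonempty.image _) ⟨q0, hq0⟩)
          rintro r' ⟨q, hq, rfl⟩
          exact (hfCT q hq).le
        linarith
      have hRhp := hcons f (constAct S z) hact hgact hRt
      rw [hhpiff f (constAct S z) hact hgact, minEU_const hCsub hCne z, huz] at hRhp
      have h2 : minEU u CHP f ≤ EU u f p := by
        apply csInf_le
        · refine ⟨u x, ?_⟩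
          rintro r' ⟨q, hq, rfl⟩
          exact (hbnd q (hCsub hq)).1
        · exact ⟨p, hp, rfl⟩
      linarith [hRhp.1]
    · -- DHP ⊆ DT
      intro p hp
      by_contra hpT
      obtain ⟨t, c, r, hsep1, hsep2⟩ := separate_point hTDconv hTDcomp hpT
      set ψ : S → ℝ := fun s => ∑ A ∈ t, A.1.indicator (fun _ => c A) s with hψdef
      have hψ : IsSimpleFn ψ := isSimpleFn_sum_ind t c
      have hψint : ∀ q ∈ ProbCharges S, fInt q ψ = ∑ A ∈ t, c A * q A := by
        intro q hq
        rw [hψdef, fInt_sum_ind hq]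
      obtain ⟨g, a, b, hact, ha0, hEU, hbnd⟩ := construct_act hX huaff hx hy hxy hψ
      have hp' : p ∈ ProbCharges S := hDsub hp
      set cmid := a * r + b with hcmid
      have hgDT : ∀ q ∈ DT, EU u g q < cmid := by
        intro q hq
        rw [hEU q (hTDsub hq), hψint q (hTDsub hq), hcmid]
        have h1 := hsep1 q hq
        nlinarith
      have hgp : cmid < EU u g p := by
        rw [hEU p hp', hψint p hp', hcmid]
        nlinarith [hsep2]
      set c' := (cmid + EU u g p) / 2 with hc'
      have hc'1 : cmid < c' := by rw [hc']; linarith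
      have hc'2 : c' < EU u g p := by rw [hc']; linarith
      obtain ⟨q0, hq0⟩ := hTDne
      have hxc' : u x ≤ c' := by
        have h1 := hgDT q0 hq0
        have h2 := (hbnd q0 (hTDsub hq0)).1
        linarith
      have hyc' : c' ≤ u y := le_trans hc'2.le (hbnd p hp').2
      obtain ⟨z, hz, huz⟩ := exists_const_outcome hX huaff hx hy hxy hxc' hyc'
      have hfact : IsAct X (constAct S z) := isAct_const hz
      have hRt : Rt (constAct S z) g := by
        rw [htiff (constAct S z) g hfact hact, minEU_const hTCsub hTCne z, huz]
        have hmax : maxEU u DT g ≤ cmid := by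
          apply csSup_le ((Set.Nonempty.image _) ⟨q0, hq0⟩)
          rintro r' ⟨q, hq, rfl⟩
          exact (hgDT q hq).le
        linarith
      have hRhp := hcons (constAct S z) g hfact hact hRt
      rw [hhpiff (constAct S z) g hfact hact, maxEU_const hDsub hDne z, huz] at hRhp
      have h2 : EU u g p ≤ maxEU u DHP g := by
        apply le_csSup
        · refine ⟨u y, ?_⟩
          rintro r' ⟨q, hq, rfl⟩
          exact (hbnd q (hDsub hq)).2
        · exact ⟨p, hp, rfl⟩
      linarith [hRhp.2]
  · rintro ⟨hC, hD⟩ f g hf hg hRt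
    rw [htiff f g hf hg] at hRt
    rw [hhpiff f g hf hg]
    obtain ⟨p0, hp0C, hp0D⟩ := hCD
    obtain ⟨lof, hif, hbf⟩ := EU_act_bounds hf u
    obtain ⟨log, hig, hbg⟩ := EU_act_bounds hg u
    have h1 : minEU u CHP g ≤ EU u g p0 := by
      apply csInf_le
      · refine ⟨log, ?_⟩
        rintro r' ⟨q, hq, rfl⟩
        exact (hbg q (hCsub hq)).1
      · exact ⟨p0, hp0C, rfl⟩
    have h2 : EU u g p0 ≤ maxEU u DHP g := by
      apply le_csSup
      · refine ⟨hig, ?_⟩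
        rintro r' ⟨q, hq, rfl⟩
        exact (hbg q (hDsub hq)).2
      · exact ⟨p0, hp0D, rfl⟩
    have h3 : maxEU u DHP g ≤ maxEU u DT g := by
      apply csSup_le_csSup
      · refine ⟨hig, ?_⟩
        rintro r' ⟨q, hq, rfl⟩
        exact (hbg q (hTDsub hq)).2
      · exact hDne.image _
      · exact Set.image_mono hD
    have h4 : minEU u CT f ≤ minEU u CHP f := by
      apply csInf_le_csInf
      · refine ⟨lof, ?_⟩
        rintro r' ⟨q, hq, rfl⟩
        exact (hbf q (hTCsub hq)).1
      · exact hCne.image _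
      · exact Set.image_mono hC
    have h5 : minEU u CHP f ≤ EU u f p0 := by
      apply csInf_le
      · refine ⟨lof, ?_⟩
        rintro r' ⟨q, hq, rfl⟩
        exact (hbf q (hCsub hq)).1
      · exact ⟨p0, hp0C, rfl⟩
    have h6 : EU u f p0 ≤ maxEU u DHP f := by
      apply le_csSup
      · refine ⟨hif, ?_⟩
        rintro r' ⟨q, hq, rfl⟩
        exact (hbf q (hDsub hq)).2
      · exact ⟨p0, hp0D, rfl⟩
    exact ⟨by linarith, by linarith⟩

end Statement
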